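/- arXiv:1802.09466 — 2 statements merged into one kernel-verified Lean document; each statement's English description precedes it below -/
import Mathlib

section
/- Let D : [0,∞) → [0,∞) be strictly increasing and right-continuous with D(0)=0, let E be its inverse E(t) = inf{s > 0 : D(s) > t}, fix τ > 0, and set T = D(τ−) (the left limit of D at τ). Suppose that for constants m > 0, γ ≥ 1, δ ∈ (0, τ) we have D(τ−) − D((τ−s)−) ≤ m·s^γ for all s ∈ [0, δ]. Then for every t ∈ [D(τ−δ), T), E(T) − E(t) ≥ ((T − t)/m)^{1/γ}. -/
/-- Let `D` be strictly increasing and right-continuous with `D(0) = 0`, let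
`E(t) = inf{s > 0 : D(s) > t}` be its generalized inverse, `τ > 0`, and
`T = D(τ-) = sup D([0,τ))`.  If `D(τ-) - D((τ-s)-) ≤ m s^γ` for all `s ∈ [0,δ]`
(where `m > 0`, `γ ≥ 1`, `0 < δ < τ`), then for every `t ∈ [D(τ-δ), T)`,
`E(T) - E(t) ≥ ((T - t)/m)^{1/γ}`. -/
theorem inverse_increment_lower_bound
    (D : ℝ → ℝ) (hDnonneg : ∀ t : ℝ, 0 ≤ t → 0 ≤ D t) (hD0 : D 0 = 0)
    (hDmono : StrictMonoOn D (Set.Ici 0))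
    (hDrc : ∀ t : ℝ, 0 ≤ t → ContinuousWithinAt D (Set.Ici t) t)
    (E : ℝ → ℝ) (hE : ∀ t : ℝ, E t = sInf {s : ℝ | 0 < s ∧ t < D s})
    (τ m γ δ T : ℝ) (hτ : 0 < τ) (hm : 0 < m) (hγ : 1 ≤ γ) (hδ0 : 0 < δ) (hδτ : δ < τ)
    (hT : T = sSup (D '' Set.Ico 0 τ))
    (hjump : ∀ s ∈ Set.Icc (0 : ℝ) δ,
      sSup (D '' Set.Ico 0 τ) - sSup (D '' Set.Ico 0 (τ - s)) ≤ m * s ^ γ) :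
    ∀ t : ℝ, D (τ - δ) ≤ t → t < T → ((T - t) / m) ^ (1 / γ) ≤ E T - E t := by
  intro t ht htT
  have hτδ : 0 < τ - δ := by linarith
  have hγ0 : (0:ℝ) < γ := lt_of_lt_of_le one_pos hγ
  -- T ≤ D τ
  have hub : ∀ x ∈ D '' Set.Ico 0 τ, x ≤ D τ := by
    rintro x ⟨u, ⟨hu0, huτ⟩, rfl⟩
    exact hDmono.monotoneOn hu0 (le_of_lt hτ) (le_of_lt huτ)
  have hne : (D '' Set.Ico 0 τ).Nonempty := ⟨D 0, ⟨0, ⟨le_refl 0, hτ⟩, rfl⟩⟩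
  have hTleDτ : T ≤ D τ := by rw [hT]; exact csSup_le hne hub
  -- t ≥ 0
  have ht0 : 0 ≤ t := le_trans (hDnonneg _ (le_of_lt hτδ)) ht
  -- sets
  have hbdd : ∀ r : ℝ, BddBelow {s : ℝ | 0 < s ∧ r < D s} :=
    fun r => ⟨0, fun s hs => le_of_lt hs.1⟩
  have hmemτ : ∀ r : ℝ, r ≤ D τ → ∀ ε : ℝ, 0 < ε → (τ + ε) ∈ {s : ℝ | 0 < s ∧ r < D s} := by
    intro r hr ε hε
    refine ⟨by linarith, lt_of_le_of_lt hr ?_⟩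
    exact hDmono (le_of_lt hτ) (Set.mem_Ici.mpr (by linarith)) (by linarith)
  have hEle : ∀ r : ℝ, r ≤ D τ → E r ≤ τ := by
    intro r hr
    rw [hE]
    refine le_of_forall_pos_le_add fun ε hε => ?_
    exact csInf_le (hbdd r) (hmemτ r hr ε hε)
  -- E T = τ
  have hETτ : E T = τ := by
    refine le_antisymm (hEle T hTleDτ) ?_
    rw [hE]
    refine le_csInf ⟨τ + 1, hmemτ T hTleDτ 1 one_pos⟩ ?_
    rintro s ⟨hs0, hsD⟩
    by_contra h
    push_neg at h
    have : D s ≤ T := by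
      rw [hT]
      exact le_csSup ⟨D τ, hub⟩ ⟨s, ⟨le_of_lt hs0, h⟩, rfl⟩
    linarith
  -- E t ≤ τ
  have hEtτ : E t ≤ τ := hEle t (le_of_lt (lt_of_lt_of_le htT hTleDτ))
  -- τ - δ ≤ E t
  have hEtlb : τ - δ ≤ E t := by
    rw [hE]
    refine le_csInf ⟨τ + 1, hmemτ t (le_of_lt (lt_of_lt_of_le htT hTleDτ)) 1 one_pos⟩ ?_
    rintro s ⟨hs0, hsD⟩
    by_contra h
    push_neg at h
    have : D s < D (τ - δ) := hDmono (le_of_lt hs0) (le_of_lt hτδ) h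
    linarith
  have hEt0 : 0 < E t := lt_of_lt_of_le hτδ hEtlb
  -- t is an upper bound of D '' Ico 0 (E t)
  have htub : ∀ x ∈ D '' Set.Ico 0 (E t), x ≤ t := by
    rintro x ⟨u, ⟨hu0, huE⟩, rfl⟩
    rcases eq_or_lt_of_le hu0 with h | h
    · rw [← h, hD0]; exact ht0
    · by_contra hc
      push_neg at hc
      have : E t ≤ u := by
        rw [hE]; exact csInf_le (hbdd t) ⟨h, hc⟩
      linarith
  have hsup : sSup (D '' Set.Ico 0 (E t)) ≤ t :=
    csSup_le ⟨D 0, ⟨0, ⟨le_refl 0, hEt0⟩, rfl⟩⟩ htub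
  -- apply hjump with s = τ - E t
  set s := τ - E t with hs
  have hs0 : 0 ≤ s := by simp [hs]; linarith
  have hsδ : s ≤ δ := by simp [hs]; linarith
  have hj := hjump s ⟨hs0, hsδ⟩
  rw [show τ - s = E t by simp [hs], ← hT] at hj
  have hTt : T - t ≤ m * s ^ γ := by linarith
  -- conclude
  have h1 : (T - t) / m ≤ s ^ γ := (div_le_iff₀ hm).2 (by linarith [mul_comm m (s ^ γ)])
  have h2 : ((T - t) / m) ^ (1 / γ) ≤ (s ^ γ) ^ (1 / γ) :=
    Real.rpow_le_rpow (div_nonneg (by linarith) (le_of_lt hm)) h1 (by positivity)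
  have h3 : (s ^ γ) ^ (1 / γ) = s := by
    rw [← Real.rpow_mul hs0, mul_one_div_cancel (ne_of_gt hγ0), Real.rpow_one]
  rw [hETτ]
  calc ((T - t) / m) ^ (1 / γ) ≤ (s ^ γ) ^ (1 / γ) := h2
    _ = s := h3
    _ = τ - E t := hs
end

section
/- Under the hypotheses of the previous setup, if additionally X : [0,∞) → ℝ satisfies |X(τ) − X(s)| ≥ c(τ − s)^β for all s ∈ (τ − δ, τ), where c > 0 and 0 < β, and γ ≥ 1 is chosen with β/γ = 1/2 and m > 0 with c/√m ≥ 4, then the time-changed function λ(t) = X(E(t)) satisfies |λ(T) − λ(t)| ≥ 4·√(T − t) for all t ∈ [D(τ−δ), T). -/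
open Topology Filter


/-- Under the setup of the previous lemma (generalized inverse `E` of a strictly
increasing right-continuous `D`, `T = D(τ-)`, with `E(T) = τ`,
`E(T) - E(t) ≥ ((T-t)/m)^{1/γ}` and `E(t) ∈ [τ-δ, τ]` for `t ∈ [D(τ-δ), T)`):
if `X` is continuous with `|X(τ) - X(s)| ≥ c(τ-s)^β` for `s ∈ (τ-δ, τ)`, where
`β/γ = 1/2` and `c ≥ 4√m`, then `λ(t) = X(E(t))` satisfies
`|λ(T) - λ(t)| ≥ 4√(T-t)` for all `t ∈ [D(τ-δ), T)`. -/
theorem time_changed_fast_decrease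
    (D E X : ℝ → ℝ) (τ m γ δ β c T : ℝ)
    (hτ : 0 < τ) (hm : 0 < m) (hγ : 1 ≤ γ) (hδ0 : 0 < δ) (hδτ : δ < τ)
    (hβ : 0 < β) (hβγ : β / γ = 1 / 2) (hc : 4 * Real.sqrt m ≤ c)
    (hXcont : Continuous X)
    (hX : ∀ s : ℝ, τ - δ < s → s < τ → c * (τ - s) ^ β ≤ |X τ - X s|)
    (hET : E T = τ)
    (hErange : ∀ t : ℝ, D (τ - δ) ≤ t → t < T → τ - δ ≤ E t ∧ E t ≤ τ)
    (hEbound : ∀ t : ℝ, D (τ - δ) ≤ t → t < T → ((T - t) / m) ^ (1 / γ) ≤ E T - E t) :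
    ∀ t : ℝ, D (τ - δ) ≤ t → t < T → 4 * Real.sqrt (T - t) ≤ |X (E T) - X (E t)| := by
  -- Extend hX to the closed left endpoint by continuity
  have hX' : ∀ s : ℝ, τ - δ ≤ s → s < τ → c * (τ - s) ^ β ≤ |X τ - X s| := by
    intro s hs1 hs2
    rcases eq_or_lt_of_le hs1 with h | h
    · -- s = τ - δ : take limit from within Ioo (τ-δ) τ
      subst h
      have hne : ((τ:ℝ) - δ) ∈ closure (Set.Ioo (τ - δ) τ) := by
        rw [closure_Ioo (by linarith : (τ:ℝ) - δ ≠ τ)]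
        exact ⟨le_refl _, by linarith⟩
      have hNB : (nhdsWithin (τ - δ) (Set.Ioo (τ - δ) τ)).NeBot :=
        mem_closure_iff_nhdsWithin_neBot.mp hne
      have hf : Filter.Tendsto (fun s => c * (τ - s) ^ β)
          (nhdsWithin (τ - δ) (Set.Ioo (τ - δ) τ)) (𝓝 (c * (τ - (τ - δ)) ^ β)) := by
        apply Filter.Tendsto.mono_left _ nhdsWithin_le_nhds
        apply Filter.Tendsto.const_mul
        apply (Real.continuousAt_rpow_const _ _ (Or.inr hβ.le)).comp
        exact (continuous_const.sub continuous_id).continuousAt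
      have hg : Filter.Tendsto (fun s => |X τ - X s|)
          (nhdsWithin (τ - δ) (Set.Ioo (τ - δ) τ)) (𝓝 (|X τ - X (τ - δ)|)) := by
        apply Filter.Tendsto.mono_left _ nhdsWithin_le_nhds
        exact ((continuous_const.sub hXcont).abs).continuousAt
      refine le_of_tendsto_of_tendsto hf hg ?_
      filter_upwards [self_mem_nhdsWithin] with x hx
      exact hX x hx.1 hx.2
    · exact hX s h hs2
  intro t ht1 ht2
  have hEt := hErange t ht1 ht2
  have hEb := hEbound t ht1 ht2
  rw [hET] at hEb
  have hTt : 0 < T - t := sub_pos.2 ht2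
  have hbase : 0 < (T - t) / m := div_pos hTt hm
  have hpow : 0 < ((T - t) / m) ^ (1 / γ) := Real.rpow_pos_of_pos hbase _
  have hEtτ : E t < τ := by linarith
  have h1 : c * (τ - E t) ^ β ≤ |X τ - X (E t)| := hX' _ hEt.1 hEtτ
  have h2 : (((T - t) / m) ^ (1 / γ)) ^ β ≤ (τ - E t) ^ β :=
    Real.rpow_le_rpow hpow.le hEb hβ.le
  have h3 : (((T - t) / m) ^ (1 / γ)) ^ β = ((T - t) / m) ^ ((1:ℝ) / 2) := by
    rw [← Real.rpow_mul hbase.le]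
    congr 1
    rw [one_div, inv_mul_eq_div, hβγ]
  have h4 : ((T - t) / m) ^ ((1:ℝ) / 2) = Real.sqrt ((T - t) / m) :=
    (Real.sqrt_eq_rpow _).symm
  have hsm : Real.sqrt m * Real.sqrt ((T - t) / m) = Real.sqrt (T - t) := by
    rw [← Real.sqrt_mul hm.le, mul_div_cancel₀ _ hm.ne']
  have hc0 : 0 < c := lt_of_lt_of_le (by positivity) hc
  have key : c * Real.sqrt ((T - t) / m) ≤ |X τ - X (E t)| := by
    calc c * Real.sqrt ((T - t) / m) = c * (((T - t) / m) ^ (1 / γ)) ^ β := by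
          rw [h3, h4]
      _ ≤ c * (τ - E t) ^ β := by
          apply mul_le_mul_of_nonneg_left h2 hc0.le
      _ ≤ |X τ - X (E t)| := h1
  rw [hET]
  calc 4 * Real.sqrt (T - t) = (4 * Real.sqrt m) * Real.sqrt ((T - t) / m) := by
        rw [mul_assoc, hsm]
    _ ≤ c * Real.sqrt ((T - t) / m) := by
        apply mul_le_mul_of_nonneg_right hc (Real.sqrt_nonneg _)
    _ ≤ |X τ - X (E t)| := key
end
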